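/- For all positive integers k and m with m ≥ k, one has 2^k · C(2m + k, k) < (14m/k)^k, where C(·,·) denotes the binomial coefficient. -/

import Mathlib

/-- Second-order binomial lower bound: `2(m+1)^(j+2) ≥ m^j (2m² + 2(j+2)m + (j+2)(j+1))`. -/
lemma aux_pow_lb (m j : ℕ) :
    m ^ j * (2 * m ^ 2 + 2 * (j + 2) * m + (j + 2) * (j + 1)) ≤ 2 * (m + 1) ^ (j + 2) := by
  induction j with
  | zero => ring_nf; nlinarith
  | succ j ih =>
      have h1 : 2 * (m + 1) ^ (j + 3) = (m + 1) * (2 * (m + 1) ^ (j + 2)) := by ring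
      have h2 : (m + 1) * (m ^ j * (2 * m ^ 2 + 2 * (j + 2) * m + (j + 2) * (j + 1)))
          ≤ (m + 1) * (2 * (m + 1) ^ (j + 2)) :=
        Nat.mul_le_mul_left _ ih
      have hinner : m * (2 * m ^ 2 + 2 * (j + 3) * m + (j + 3) * (j + 2))
          ≤ (m + 1) * (2 * m ^ 2 + 2 * (j + 2) * m + (j + 2) * (j + 1)) := by nlinarith
      have h3 : m ^ (j + 1) * (2 * m ^ 2 + 2 * (j + 3) * m + (j + 3) * (j + 2))
          ≤ (m + 1) * (m ^ j * (2 * m ^ 2 + 2 * (j + 2) * m + (j + 2) * (j + 1))) := by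
        calc m ^ (j + 1) * (2 * m ^ 2 + 2 * (j + 3) * m + (j + 3) * (j + 2))
            = m ^ j * (m * (2 * m ^ 2 + 2 * (j + 3) * m + (j + 3) * (j + 2))) := by ring
          _ ≤ m ^ j * ((m + 1) * (2 * m ^ 2 + 2 * (j + 2) * m + (j + 2) * (j + 1))) :=
              Nat.mul_le_mul_left _ hinner
          _ = (m + 1) * (m ^ j * (2 * m ^ 2 + 2 * (j + 2) * m + (j + 2) * (j + 1))) := by ring
      calc m ^ (j + 1) * (2 * m ^ 2 + 2 * (j + 3) * m + (j + 3) * (j + 2))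
          ≤ (m + 1) * (m ^ j * (2 * m ^ 2 + 2 * (j + 2) * m + (j + 2) * (j + 1))) := h3
        _ ≤ (m + 1) * (2 * (m + 1) ^ (j + 2)) := h2
        _ = 2 * (m + 1) ^ (j + 3) := by ring

/-- The key ratio inequality for the induction step on `m`. -/
lemma step_ineq (k m : ℕ) (hk : 1 ≤ k) (hm : 1 ≤ m) :
    m ^ k * ((2 * m + k + 1) * (2 * m + k + 2))
      ≤ (m + 1) ^ k * ((2 * m + 1) * (2 * m + 2)) := by
  rcases Nat.lt_or_ge k 2 with h2 | h2
  · -- k = 1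
    interval_cases k
    nlinarith
  · obtain ⟨j, rfl⟩ : ∃ j, k = j + 2 := ⟨k - 2, by omega⟩
    have hpoly : 2 * m ^ 2 * ((2 * m + (j + 2) + 1) * (2 * m + (j + 2) + 2))
        ≤ (2 * m ^ 2 + 2 * (j + 2) * m + (j + 2) * (j + 1)) * ((2 * m + 1) * (2 * m + 2)) := by
      nlinarith [sq_nonneg m, sq_nonneg j, Nat.zero_le (j * m)]
    have h1 : m ^ (j + 2) * ((2 * m + (j + 2) + 1) * (2 * m + (j + 2) + 2)) * 2
        = m ^ j * (2 * m ^ 2 * ((2 * m + (j + 2) + 1) * (2 * m + (j + 2) + 2))) := by ring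
    have h4 := Nat.mul_le_mul_left (m ^ j) hpoly
    have h5 := Nat.mul_le_mul_right ((2 * m + 1) * (2 * m + 2)) (aux_pow_lb m j)
    have h6 : m ^ (j + 2) * ((2 * m + (j + 2) + 1) * (2 * m + (j + 2) + 2)) * 2
        ≤ (m + 1) ^ (j + 2) * ((2 * m + 1) * (2 * m + 2)) * 2 := by
      calc m ^ (j + 2) * ((2 * m + (j + 2) + 1) * (2 * m + (j + 2) + 2)) * 2
          = m ^ j * (2 * m ^ 2 * ((2 * m + (j + 2) + 1) * (2 * m + (j + 2) + 2))) := h1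
        _ ≤ m ^ j * ((2 * m ^ 2 + 2 * (j + 2) * m + (j + 2) * (j + 1))
              * ((2 * m + 1) * (2 * m + 2))) := h4
        _ = m ^ j * (2 * m ^ 2 + 2 * (j + 2) * m + (j + 2) * (j + 1))
              * ((2 * m + 1) * (2 * m + 2)) := by ring
        _ ≤ 2 * (m + 1) ^ (j + 2) * ((2 * m + 1) * (2 * m + 2)) := h5
        _ = (m + 1) ^ (j + 2) * ((2 * m + 1) * (2 * m + 2)) * 2 := by ring
    omega

/-- `C(n+1,k)·(n+1-k) = C(n,k)·(n+1)`. -/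
lemma choose_succ_id (n k : ℕ) : (n + 1).choose k * (n + 1 - k) = n.choose k * (n + 1) := by
  have h1 := Nat.choose_succ_right_eq (n + 1) k
  have h2 := Nat.add_one_mul_choose_eq n k
  calc (n + 1).choose k * (n + 1 - k) = (n + 1).choose (k + 1) * (k + 1) := h1.symm
    _ = (n + 1) * n.choose k := h2.symm
    _ = n.choose k * (n + 1) := mul_comm _ _

/-- Base case: `2^k · C(3k,k) < 14^k` for `k ≥ 1`. -/
lemma base_case (k : ℕ) (hk : 1 ≤ k) : 2 ^ k * (3 * k).choose k < 14 ^ k := by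
  induction k with
  | zero => omega
  | succ k ih =>
      rcases Nat.eq_or_lt_of_le hk with h1 | h1
      · have : k = 0 := by omega
        subst this
        decide
      · have hk1 : 1 ≤ k := by omega
        have ih := ih hk1
        -- identities
        have id1 : (3 * k + 1).choose k * (2 * k + 1) = (3 * k).choose k * (3 * k + 1) := by
          have := choose_succ_id (3 * k) k
          have h : 3 * k + 1 - k = 2 * k + 1 := by omega
          rwa [h] at this
        have id2 : (3 * k + 2).choose k * (2 * k + 2) = (3 * k + 1).choose k * (3 * k + 2) := by
          have := choose_succ_id (3 * k + 1) k
          have h : 3 * k + 1 + 1 - k = 2 * k + 2 := by omega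
          rwa [h] at this
        have id3 : (3 * k + 3).choose (k + 1) * (k + 1) = (3 * k + 2).choose k * (3 * k + 3) := by
          have h := Nat.add_one_mul_choose_eq (3 * k + 2) k
          rw [show 3 * k + 2 + 1 = 3 * k + 3 from rfl] at h
          rw [← h, mul_comm]
        have key : (3 * k + 3).choose (k + 1) * ((k + 1) * (2 * k + 1) * (2 * k + 2))
            = (3 * k).choose k * ((3 * k + 1) * (3 * k + 2) * (3 * k + 3)) := by
          calc (3 * k + 3).choose (k + 1) * ((k + 1) * (2 * k + 1) * (2 * k + 2))
              = ((3 * k + 3).choose (k + 1) * (k + 1)) * (2 * k + 1) * (2 * k + 2) := by ring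
            _ = ((3 * k + 2).choose k * (3 * k + 3)) * (2 * k + 1) * (2 * k + 2) := by rw [id3]
            _ = ((3 * k + 2).choose k * (2 * k + 2)) * (2 * k + 1) * (3 * k + 3) := by ring
            _ = ((3 * k + 1).choose k * (3 * k + 2)) * (2 * k + 1) * (3 * k + 3) := by rw [id2]
            _ = ((3 * k + 1).choose k * (2 * k + 1)) * (3 * k + 2) * (3 * k + 3) := by ring
            _ = ((3 * k).choose k * (3 * k + 1)) * (3 * k + 2) * (3 * k + 3) := by rw [id1]
            _ = (3 * k).choose k * ((3 * k + 1) * (3 * k + 2) * (3 * k + 3)) := by ring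
        have hratio : 2 * ((3 * k + 1) * (3 * k + 2) * (3 * k + 3))
            ≤ 14 * ((k + 1) * (2 * k + 1) * (2 * k + 2)) := by
          have hq : 6 * ((3 * k + 1) * (3 * k + 2)) ≤ 14 * ((2 * k + 1) * (2 * k + 2)) := by
            nlinarith
          calc 2 * ((3 * k + 1) * (3 * k + 2) * (3 * k + 3))
              = (k + 1) * (6 * ((3 * k + 1) * (3 * k + 2))) := by ring
            _ ≤ (k + 1) * (14 * ((2 * k + 1) * (2 * k + 2))) := Nat.mul_le_mul_left _ hq
            _ = 14 * ((k + 1) * (2 * k + 1) * (2 * k + 2)) := by ring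
        have hpos : 0 < (k + 1) * (2 * k + 1) * (2 * k + 2) := by positivity
        have hchain : 2 ^ (k + 1) * (3 * (k + 1)).choose (k + 1)
              * ((k + 1) * (2 * k + 1) * (2 * k + 2))
            < 14 ^ (k + 1) * ((k + 1) * (2 * k + 1) * (2 * k + 2)) := by
          have h3 : 3 * (k + 1) = 3 * k + 3 := by ring
          rw [h3]
          calc 2 ^ (k + 1) * (3 * k + 3).choose (k + 1)
                * ((k + 1) * (2 * k + 1) * (2 * k + 2))
              = 2 ^ k * ((3 * k + 3).choose (k + 1)
                  * ((k + 1) * (2 * k + 1) * (2 * k + 2))) * 2 := by ring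
            _ = 2 ^ k * ((3 * k).choose k
                  * ((3 * k + 1) * (3 * k + 2) * (3 * k + 3))) * 2 := by rw [key]
            _ = (2 ^ k * (3 * k).choose k)
                  * (2 * ((3 * k + 1) * (3 * k + 2) * (3 * k + 3))) := by ring
            _ < 14 ^ k * (2 * ((3 * k + 1) * (3 * k + 2) * (3 * k + 3))) :=
                mul_lt_mul_of_pos_right ih (by positivity)
            _ ≤ 14 ^ k * (14 * ((k + 1) * (2 * k + 1) * (2 * k + 2))) :=
                Nat.mul_le_mul_left _ hratio
            _ = 14 ^ (k + 1) * ((k + 1) * (2 * k + 1) * (2 * k + 2)) := by ring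
        exact Nat.lt_of_mul_lt_mul_right hchain

lemma nat_key (k m : ℕ) (hk : 0 < k) (hm : k ≤ m) :
    2 ^ k * (2 * m + k).choose k * k ^ k < (14 * m) ^ k := by
  induction m, hm using Nat.le_induction with
  | base =>
      have h3 : 2 * k + k = 3 * k := by ring
      rw [h3, mul_pow]
      have := base_case k hk
      exact mul_lt_mul_of_pos_right this (by positivity)
  | succ m hm ih =>
      have id1 : (2 * m + k + 1).choose k * (2 * m + 1) = (2 * m + k).choose k * (2 * m + k + 1) := by
        have := choose_succ_id (2 * m + k) k
        have h : 2 * m + k + 1 - k = 2 * m + 1 := by omega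
        rwa [h] at this
      have id2 : (2 * m + k + 2).choose k * (2 * m + 2)
          = (2 * m + k + 1).choose k * (2 * m + k + 2) := by
        have := choose_succ_id (2 * m + k + 1) k
        have h : 2 * m + k + 1 + 1 - k = 2 * m + 2 := by omega
        rwa [h] at this
      have key : (2 * m + k + 2).choose k * ((2 * m + 1) * (2 * m + 2))
          = (2 * m + k).choose k * ((2 * m + k + 1) * (2 * m + k + 2)) := by
        calc (2 * m + k + 2).choose k * ((2 * m + 1) * (2 * m + 2))
            = (2 * m + k + 2).choose k * (2 * m + 2) * (2 * m + 1) := by ring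
          _ = (2 * m + k + 1).choose k * (2 * m + k + 2) * (2 * m + 1) := by rw [id2]
          _ = (2 * m + k + 1).choose k * (2 * m + 1) * (2 * m + k + 2) := by ring
          _ = (2 * m + k).choose k * (2 * m + k + 1) * (2 * m + k + 2) := by rw [id1]
          _ = (2 * m + k).choose k * ((2 * m + k + 1) * (2 * m + k + 2)) := by ring
      have hstep := step_ineq k m hk (le_trans hk hm)
      have hpos : 0 < (2 * m + 1) * (2 * m + 2) := by positivity
      have hchain : 2 ^ k * (2 * (m + 1) + k).choose k * k ^ k * ((2 * m + 1) * (2 * m + 2))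
          < (14 * (m + 1)) ^ k * ((2 * m + 1) * (2 * m + 2)) := by
        have h2 : 2 * (m + 1) + k = 2 * m + k + 2 := by ring
        rw [h2]
        calc 2 ^ k * (2 * m + k + 2).choose k * k ^ k * ((2 * m + 1) * (2 * m + 2))
            = 2 ^ k * ((2 * m + k + 2).choose k * ((2 * m + 1) * (2 * m + 2))) * k ^ k := by ring
          _ = 2 ^ k * ((2 * m + k).choose k * ((2 * m + k + 1) * (2 * m + k + 2))) * k ^ k := by
              rw [key]
          _ = (2 ^ k * (2 * m + k).choose k * k ^ k)
                * ((2 * m + k + 1) * (2 * m + k + 2)) := by ring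
          _ < (14 * m) ^ k * ((2 * m + k + 1) * (2 * m + k + 2)) :=
              mul_lt_mul_of_pos_right ih (by positivity)
          _ = 14 ^ k * (m ^ k * ((2 * m + k + 1) * (2 * m + k + 2))) := by rw [mul_pow]; ring
          _ ≤ 14 ^ k * ((m + 1) ^ k * ((2 * m + 1) * (2 * m + 2))) :=
              Nat.mul_le_mul_left _ hstep
          _ = (14 * (m + 1)) ^ k * ((2 * m + 1) * (2 * m + 2)) := by rw [mul_pow]; ring
      exact Nat.lt_of_mul_lt_mul_right hchain

/-- For positive integers `k ≤ m` one has `2^k · C(2m+k, k) < (14m/k)^k`. -/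
theorem two_pow_mul_choose_lt (k m : ℕ) (hk : 0 < k) (hm : k ≤ m) :
    ((2 ^ k * (2 * m + k).choose k : ℕ) : ℝ) < (14 * m / k) ^ k := by
  have key := nat_key k m hk hm
  have hkR : (0 : ℝ) < (k : ℝ) := by exact_mod_cast hk
  rw [div_pow, lt_div_iff₀ (by positivity)]
  have hcast : ((2 ^ k * (2 * m + k).choose k * k ^ k : ℕ) : ℝ)
      < (((14 * m) ^ k : ℕ) : ℝ) := by exact_mod_cast key
  push_cast at hcast
  push_cast
  linarith
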